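/- Lower bound on TV distance between balanced product distributions: there exist absolute constants α₀ ∈ (0,1] and C > 0 such that if P and Q are product distributions on {0,1}^d with mean vectors p, q satisfying p_i ∈ [1/3, 2/3] for all i, and ‖p − q‖₂ ≥ α for some α ≤ α₀, then SD(P, Q) ≥ C·α. -/

import Mathlib

open scoped BigOperators

/-- The product Bernoulli distribution on `{0,1}^d` with mean vector `p`
(`true` encodes `1`). -/
noncomputable def prodBer (d : ℕ) (p : Fin d → ℝ) (x : Fin d → Bool) : ℝ :=
  ∏ i, if x i then p i else 1 - p i

/-- Statistical distance between two product Bernoulli distributions on `{0,1}^d`. -/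
noncomputable def sdBer (d : ℕ) (p q : Fin d → ℝ) : ℝ :=
  (1/2) * ∑ x : Fin d → Bool, |prodBer d p x - prodBer d q x|

lemma sum_prod_cube {d : ℕ} (g : Fin d → Bool → ℝ) :
    ∑ x : Fin d → Bool, ∏ i, g i (x i) = ∏ i, (g i true + g i false) := by
  rw [← Fintype.prod_sum fun i b => g i b]
  exact Finset.prod_congr rfl fun i _ => by simp

lemma prodExp {d : ℕ} (p : Fin d → ℝ) (g : Fin d → Bool → ℝ) :
    ∑ x : Fin d → Bool, prodBer d p x * ∏ i, g i (x i)
      = ∏ i, (p i * g i true + (1 - p i) * g i false) := by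
  have h : ∀ x : Fin d → Bool, prodBer d p x * ∏ i, g i (x i)
      = ∏ i, ((if x i then p i else 1 - p i) * g i (x i)) := by
    intro x; rw [prodBer, ← Finset.prod_mul_distrib]
  simp_rw [h]
  rw [sum_prod_cube (fun i b => (if b then p i else 1 - p i) * g i b)]
  simp

lemma prodBer_mass {d : ℕ} (p : Fin d → ℝ) : ∑ x : Fin d → Bool, prodBer d p x = 1 := by
  have := prodExp p (fun _ _ => (1:ℝ))
  simpa using this

lemma prodBer_marginal {d : ℕ} (p : Fin d → ℝ) (i : Fin d) :
    ∑ x : Fin d → Bool, prodBer d p x * (if x i then (1:ℝ) else 0) = p i := by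
  have h := prodExp p (fun k b => if k = i then (if b then (1:ℝ) else 0) else 1)
  have e1 : ∀ x : Fin d → Bool,
      (∏ k, (if k = i then (if x k then (1:ℝ) else 0) else 1)) = (if x i then (1:ℝ) else 0) := by
    intro x
    rw [Finset.prod_ite_eq' Finset.univ i (fun k => (if x k then (1:ℝ) else 0))]
    simp
  simp_rw [e1] at h
  rw [h]
  have e2 : ∀ k : Fin d,
      ((p k * if k = i then if True then (1:ℝ) else 0 else 1) +
        (1 - p k) * if k = i then if false = true then (1:ℝ) else 0 else 1)
      = (if k = i then p k else 1) := by
    intro k; by_cases hk : k = i <;> simp [hk] <;> ring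
  rw [Finset.prod_congr rfl fun k _ => e2 k,
    Finset.prod_ite_eq' Finset.univ i (fun k => p k)]
  simp

lemma sdBer_nonneg {d : ℕ} (p q : Fin d → ℝ) : 0 ≤ sdBer d p q := by
  apply mul_nonneg (by norm_num)
  exact Finset.sum_nonneg fun x _ => abs_nonneg _

lemma sdBer_ge_coord {d : ℕ} (p q : Fin d → ℝ) (i : Fin d) :
    |p i - q i| ≤ sdBer d p q := by
  classical
  set D : (Fin d → Bool) → ℝ := fun x => prodBer d p x - prodBer d q x with hD
  have htrue : ∑ x : Fin d → Bool, (if x i then D x else 0) = p i - q i := by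
    have : ∀ x : Fin d → Bool, (if x i then D x else 0)
        = prodBer d p x * (if x i then (1:ℝ) else 0)
          - prodBer d q x * (if x i then (1:ℝ) else 0) := by
      intro x; by_cases h : x i <;> simp [hD, h]
    simp_rw [this, Finset.sum_sub_distrib, prodBer_marginal]
  have hall : ∑ x : Fin d → Bool, D x = 0 := by
    simp [hD, Finset.sum_sub_distrib, prodBer_mass]
  have hfalse : ∑ x : Fin d → Bool, (if x i then 0 else D x) = -(p i - q i) := by
    have := Finset.sum_add_distrib (s := (Finset.univ : Finset (Fin d → Bool)))
      (f := fun x => (if x i then D x else 0)) (g := fun x => (if x i then 0 else D x))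
    have heq : ∀ x : Fin d → Bool,
        (if x i then D x else 0) + (if x i then 0 else D x) = D x := by
      intro x; by_cases h : x i <;> simp [h]
    rw [Finset.sum_congr rfl (fun x _ => heq x)] at this
    rw [hall, htrue] at this
    linarith
  have h1 : |∑ x : Fin d → Bool, (if x i then D x else 0)|
      ≤ ∑ x : Fin d → Bool, |if x i then D x else 0| := Finset.abs_sum_le_sum_abs _ _
  have h2 : |∑ x : Fin d → Bool, (if x i then 0 else D x)|
      ≤ ∑ x : Fin d → Bool, |if x i then 0 else D x| := Finset.abs_sum_le_sum_abs _ _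
  have h3 : ∑ x : Fin d → Bool, (|if x i then D x else 0| + |if x i then 0 else D x|)
      = ∑ x : Fin d → Bool, |D x| := by
    apply Finset.sum_congr rfl; intro x _; by_cases h : x i <;> simp [h]
  rw [htrue] at h1; rw [hfalse] at h2
  rw [sdBer]
  rw [Finset.sum_add_distrib] at h3
  rw [abs_neg] at h2
  have : |p i - q i| + |p i - q i| ≤ ∑ x : Fin d → Bool, |D x| := by
    rw [← h3]; exact add_le_add h1 h2
  simp only [hD] at this ⊢
  linarith

lemma expY {d : ℕ} (p Δ : Fin d → ℝ) (i : Fin d) :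
    ∑ x : Fin d → Bool, prodBer d p x * (Δ i * ((if x i then (1:ℝ) else 0) - p i)) = 0 := by
  have : ∀ x : Fin d → Bool, prodBer d p x * (Δ i * ((if x i then (1:ℝ) else 0) - p i))
      = Δ i * (prodBer d p x * (if x i then (1:ℝ) else 0)) - (Δ i * p i) * prodBer d p x := by
    intro x; ring
  simp_rw [this, Finset.sum_sub_distrib, ← Finset.mul_sum, prodBer_marginal, prodBer_mass]
  ring

lemma expYY_same {d : ℕ} (p Δ : Fin d → ℝ) (i : Fin d) :
    ∑ x : Fin d → Bool, prodBer d p x *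
      ((Δ i * ((if x i then (1:ℝ) else 0) - p i)) * (Δ i * ((if x i then (1:ℝ) else 0) - p i)))
      = Δ i ^ 2 * (p i * (1 - p i)) := by
  have h := prodExp p (fun k b =>
    if k = i then (Δ i * ((if b then (1:ℝ) else 0) - p i))^2 else 1)
  have e1 : ∀ x : Fin d → Bool,
      (∏ k, (if k = i then (Δ i * ((if x k then (1:ℝ) else 0) - p i))^2 else 1))
      = (Δ i * ((if x i then (1:ℝ) else 0) - p i)) * (Δ i * ((if x i then (1:ℝ) else 0) - p i)) := by
    intro x
    rw [Finset.prod_ite_eq' Finset.univ i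
      (fun k => (Δ i * ((if x k then (1:ℝ) else 0) - p i))^2)]
    simp [sq]
  simp_rw [e1] at h
  rw [h]
  have e2 : ∀ k : Fin d,
      (p k * (if k = i then (Δ i * ((if True then (1:ℝ) else 0) - p i))^2 else 1)
       + (1 - p k) * (if k = i then (Δ i * ((if false = true then (1:ℝ) else 0) - p i))^2 else 1))
      = (if k = i then Δ i ^ 2 * (p i * (1 - p i)) else 1) := by
    intro k; by_cases hk : k = i
    · subst hk; simp only [if_pos rfl]; norm_num; ring
    · simp [hk]
  calc ∏ k, _ = ∏ k, (if k = i then Δ i ^ 2 * (p i * (1 - p i)) else 1) :=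
        Finset.prod_congr rfl fun k _ => e2 k
    _ = Δ i ^ 2 * (p i * (1 - p i)) := by
        rw [Finset.prod_ite_eq' Finset.univ i (fun k => Δ i ^ 2 * (p i * (1 - p i)))]; simp

lemma expYY_ne {d : ℕ} (p Δ : Fin d → ℝ) {i j : Fin d} (hij : i ≠ j) :
    ∑ x : Fin d → Bool, prodBer d p x *
      ((Δ i * ((if x i then (1:ℝ) else 0) - p i)) * (Δ j * ((if x j then (1:ℝ) else 0) - p j)))
      = 0 := by
  have h := prodExp p (fun k b =>
    (if k = i then Δ i * ((if b then (1:ℝ) else 0) - p i) else 1) *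
    (if k = j then Δ j * ((if b then (1:ℝ) else 0) - p j) else 1))
  have e1 : ∀ x : Fin d → Bool,
      (∏ k, ((if k = i then Δ i * ((if x k then (1:ℝ) else 0) - p i) else 1) *
        (if k = j then Δ j * ((if x k then (1:ℝ) else 0) - p j) else 1)))
      = (Δ i * ((if x i then (1:ℝ) else 0) - p i)) * (Δ j * ((if x j then (1:ℝ) else 0) - p j)) := by
    intro x
    rw [Finset.prod_mul_distrib,
      Finset.prod_ite_eq' Finset.univ i (fun k => Δ i * ((if x k then (1:ℝ) else 0) - p i)),
      Finset.prod_ite_eq' Finset.univ j (fun k => Δ j * ((if x k then (1:ℝ) else 0) - p j))]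
    simp
  simp_rw [e1] at h
  rw [h]
  apply Finset.prod_eq_zero (Finset.mem_univ i)
  rw [if_pos rfl, if_pos rfl, if_neg hij, if_neg hij]
  norm_num; ring

lemma expSsq {d : ℕ} (p Δ : Fin d → ℝ) :
    ∑ x : Fin d → Bool, prodBer d p x * (∑ i, Δ i * ((if x i then (1:ℝ) else 0) - p i))^2
      = ∑ i, Δ i ^ 2 * (p i * (1 - p i)) := by
  have hsq : ∀ x : Fin d → Bool, (∑ i, Δ i * ((if x i then (1:ℝ) else 0) - p i))^2
      = ∑ i, ∑ j, (Δ i * ((if x i then (1:ℝ) else 0) - p i)) *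
          (Δ j * ((if x j then (1:ℝ) else 0) - p j)) := by
    intro x; rw [sq, Finset.sum_mul_sum]
  simp_rw [hsq, Finset.mul_sum]
  rw [Finset.sum_comm]
  have : ∀ i : Fin d, ∑ x : Fin d → Bool, ∑ j, prodBer d p x *
      ((Δ i * ((if x i then (1:ℝ) else 0) - p i)) * (Δ j * ((if x j then (1:ℝ) else 0) - p j)))
      = Δ i ^ 2 * (p i * (1 - p i)) := by
    intro i
    rw [Finset.sum_comm]
    rw [Finset.sum_eq_single i]
    · exact expYY_same p Δ i
    · intro j _ hj; exact expYY_ne p Δ (Ne.symm hj)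
    · intro h; exact absurd (Finset.mem_univ i) h
  exact Finset.sum_congr rfl fun i _ => this i

lemma prodBer_nonneg {d : ℕ} (p : Fin d → ℝ) (hp : ∀ i, p i ∈ Set.Icc (0:ℝ) 1)
    (x : Fin d → Bool) : 0 ≤ prodBer d p x := by
  apply Finset.prod_nonneg
  intro i _
  rcases hp i with ⟨h0, h1⟩
  by_cases h : x i <;> simp [h] <;> linarith

lemma expU {d : ℕ} (r Δ : Fin d → ℝ) (m : ℝ) :
    ∑ x : Fin d → Bool, prodBer d r x * ((∑ i, Δ i * (if x i then (1:ℝ) else 0)) - m)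
      = (∑ i, Δ i * r i) - m := by
  have key : ∀ x : Fin d → Bool, prodBer d r x * ((∑ i, Δ i * (if x i then (1:ℝ) else 0)) - m)
      = (∑ i, Δ i * (prodBer d r x * (if x i then (1:ℝ) else 0))) - m * prodBer d r x := by
    intro x
    rw [mul_sub, Finset.mul_sum, mul_comm m]
    congr 1
    exact Finset.sum_congr rfl fun i _ => by ring
  rw [Finset.sum_congr rfl fun x _ => key x, Finset.sum_sub_distrib, Finset.sum_comm,
    ← Finset.mul_sum, prodBer_mass]
  have h2 : ∀ i : Fin d, ∑ x : Fin d → Bool, Δ i * (prodBer d r x * (if x i then (1:ℝ) else 0))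
      = Δ i * r i := fun i => by rw [← Finset.mul_sum, prodBer_marginal]
  rw [Finset.sum_congr rfl fun i _ => h2 i]
  ring

lemma expS {d : ℕ} (r Δ : Fin d → ℝ) :
    ∑ x : Fin d → Bool, prodBer d r x * (∑ i, Δ i * ((if x i then (1:ℝ) else 0) - r i)) = 0 := by
  have key : ∀ x : Fin d → Bool, prodBer d r x * (∑ i, Δ i * ((if x i then (1:ℝ) else 0) - r i))
      = ∑ i, prodBer d r x * (Δ i * ((if x i then (1:ℝ) else 0) - r i)) := by
    intro x; rw [Finset.mul_sum]
  rw [Finset.sum_congr rfl fun x _ => key x, Finset.sum_comm]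
  rw [Finset.sum_congr rfl fun i (_ : i ∈ Finset.univ) => expY r Δ i]
  simp

lemma expUsq {d : ℕ} (r Δ : Fin d → ℝ) (m : ℝ) :
    ∑ x : Fin d → Bool, prodBer d r x * ((∑ i, Δ i * (if x i then (1:ℝ) else 0)) - m)^2
      = (∑ i, Δ i ^ 2 * (r i * (1 - r i))) + ((∑ i, Δ i * r i) - m)^2 := by
  set c : ℝ := (∑ i, Δ i * r i) - m with hc
  have hUS : ∀ x : Fin d → Bool, (∑ i, Δ i * (if x i then (1:ℝ) else 0)) - m
      = (∑ i, Δ i * ((if x i then (1:ℝ) else 0) - r i)) + c := by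
    intro x
    have : ∑ i, Δ i * ((if x i then (1:ℝ) else 0) - r i)
        = (∑ i, Δ i * (if x i then (1:ℝ) else 0)) - ∑ i, Δ i * r i := by
      simp_rw [mul_sub]; rw [Finset.sum_sub_distrib]
    rw [this, hc]; ring
  have key : ∀ x : Fin d → Bool,
      prodBer d r x * ((∑ i, Δ i * (if x i then (1:ℝ) else 0)) - m)^2
      = prodBer d r x * (∑ i, Δ i * ((if x i then (1:ℝ) else 0) - r i))^2
        + (2*c) * (prodBer d r x * (∑ i, Δ i * ((if x i then (1:ℝ) else 0) - r i)))
        + c^2 * prodBer d r x := by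
    intro x; rw [hUS x]; ring
  rw [Finset.sum_congr rfl fun x _ => key x, Finset.sum_add_distrib, Finset.sum_add_distrib,
    ← Finset.mul_sum, ← Finset.mul_sum, expSsq, expS, prodBer_mass]
  ring

lemma sdBer_ge_quad {d : ℕ} (p q : Fin d → ℝ) (hp : ∀ i, p i ∈ Set.Icc (0:ℝ) 1)
    (hq : ∀ i, q i ∈ Set.Icc (0:ℝ) 1) :
    (∑ i, (p i - q i)^2)^2
      ≤ ((∑ i, (p i - q i)^2) + (∑ i, (p i - q i)^2)^2) * sdBer d p q := by
  classical
  set Δ : Fin d → ℝ := fun i => p i - q i with hΔ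
  set s : ℝ := ∑ i, (p i - q i)^2 with hs
  have hsΔ : s = ∑ i, Δ i ^ 2 := rfl
  have hs0 : 0 ≤ s := Finset.sum_nonneg fun i _ => sq_nonneg _
  set m : ℝ := ∑ i, Δ i * ((p i + q i)/2) with hm
  set U : (Fin d → Bool) → ℝ :=
    fun x => (∑ i, Δ i * (if x i then (1:ℝ) else 0)) - m with hU
  have hmp : (∑ i, Δ i * p i) - m = s/2 := by
    rw [hm, ← Finset.sum_sub_distrib]
    rw [Finset.sum_congr rfl fun i (_ : i ∈ Finset.univ) =>
      (by simp only [hΔ]; ring : Δ i * p i - Δ i * ((p i + q i)/2) = (p i - q i)^2/2)]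
    rw [← Finset.sum_div, ← hs]
  have hmq : (∑ i, Δ i * q i) - m = -(s/2) := by
    rw [hm, ← Finset.sum_sub_distrib]
    rw [Finset.sum_congr rfl fun i (_ : i ∈ Finset.univ) =>
      (by simp only [hΔ]; ring : Δ i * q i - Δ i * ((p i + q i)/2) = -((p i - q i)^2/2))]
    rw [Finset.sum_neg_distrib, ← Finset.sum_div, ← hs]
  -- second moments
  have hvarb : ∀ r : Fin d → ℝ, (∀ i, r i ∈ Set.Icc (0:ℝ) 1) →
      (∑ i, Δ i ^ 2 * (r i * (1 - r i))) ≤ s/4 := by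
    intro r hr
    rw [hsΔ, Finset.sum_div]
    apply Finset.sum_le_sum
    intro i _
    rcases hr i with ⟨h0, h1⟩
    nlinarith [sq_nonneg (Δ i), sq_nonneg (1 - 2 * r i), sq_nonneg (Δ i * (1 - 2 * r i))]
  have hBp : ∑ x : Fin d → Bool, prodBer d p x * (U x)^2 ≤ s/4 + s^2/4 := by
    rw [hU, expUsq p Δ m, hmp]
    have := hvarb p hp
    nlinarith [sq_nonneg s]
  have hBq : ∑ x : Fin d → Bool, prodBer d q x * (U x)^2 ≤ s/4 + s^2/4 := by
    rw [hU, expUsq q Δ m, hmq]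
    have := hvarb q hq
    nlinarith [sq_nonneg s]
  -- gap
  have hgap : ∑ x : Fin d → Bool, (prodBer d p x - prodBer d q x) * U x = s := by
    have : ∀ x : Fin d → Bool, (prodBer d p x - prodBer d q x) * U x
        = prodBer d p x * U x - prodBer d q x * U x := fun x => by ring
    rw [Finset.sum_congr rfl fun x _ => this x, Finset.sum_sub_distrib, hU,
      expU p Δ m, expU q Δ m, hmp, hmq]
    ring
  -- Cauchy-Schwarz
  set f : (Fin d → Bool) → ℝ := fun x => |U x| * Real.sqrt (prodBer d p x + prodBer d q x)
  set g : (Fin d → Bool) → ℝ := fun x => Real.sqrt |prodBer d p x - prodBer d q x|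
  have hpt : ∀ x : Fin d → Bool, (prodBer d p x - prodBer d q x) * U x ≤ f x * g x := by
    intro x
    have hP := prodBer_nonneg p hp x
    have hQ := prodBer_nonneg q hq x
    have habs : |prodBer d p x - prodBer d q x| ≤ prodBer d p x + prodBer d q x := by
      rw [abs_le]; constructor <;> linarith
    have h1 : (prodBer d p x - prodBer d q x) * U x
        ≤ |U x| * |prodBer d p x - prodBer d q x| := by
      calc (prodBer d p x - prodBer d q x) * U x ≤ |(prodBer d p x - prodBer d q x) * U x| :=
            le_abs_self _
        _ = |U x| * |prodBer d p x - prodBer d q x| := by rw [abs_mul]; ring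
    have h2 : |prodBer d p x - prodBer d q x|
        ≤ Real.sqrt (prodBer d p x + prodBer d q x) * Real.sqrt |prodBer d p x - prodBer d q x| := by
      have e : |prodBer d p x - prodBer d q x|
          = Real.sqrt |prodBer d p x - prodBer d q x|
            * Real.sqrt |prodBer d p x - prodBer d q x| :=
        (Real.mul_self_sqrt (abs_nonneg _)).symm
      have mono : Real.sqrt |prodBer d p x - prodBer d q x|
          ≤ Real.sqrt (prodBer d p x + prodBer d q x) := Real.sqrt_le_sqrt habs
      calc |prodBer d p x - prodBer d q x|
          = Real.sqrt |prodBer d p x - prodBer d q x|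
            * Real.sqrt |prodBer d p x - prodBer d q x| := e
        _ ≤ Real.sqrt (prodBer d p x + prodBer d q x)
            * Real.sqrt |prodBer d p x - prodBer d q x| :=
            mul_le_mul_of_nonneg_right mono (Real.sqrt_nonneg _)
    calc (prodBer d p x - prodBer d q x) * U x
        ≤ |U x| * |prodBer d p x - prodBer d q x| := h1
      _ ≤ |U x| * (Real.sqrt (prodBer d p x + prodBer d q x)
            * Real.sqrt |prodBer d p x - prodBer d q x|) :=
          mul_le_mul_of_nonneg_left h2 (abs_nonneg _)
      _ = f x * g x := by ring
  have hfg : s ≤ ∑ x : Fin d → Bool, f x * g x := by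
    rw [← hgap]; exact Finset.sum_le_sum fun x _ => hpt x
  have hCS := Finset.sum_mul_sq_le_sq_mul_sq Finset.univ f g
  have hf2 : ∑ x : Fin d → Bool, f x ^ 2 ≤ s/2 + s^2/2 := by
    have : ∀ x : Fin d → Bool, f x ^ 2
        = prodBer d p x * (U x)^2 + prodBer d q x * (U x)^2 := by
      intro x
      have hP := prodBer_nonneg p hp x
      have hQ := prodBer_nonneg q hq x
      have : f x ^ 2 = (U x)^2 * (Real.sqrt (prodBer d p x + prodBer d q x))^2 := by
        simp only [f, mul_pow, sq_abs]
      rw [this, Real.sq_sqrt (by positivity)]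
      ring
    rw [Finset.sum_congr rfl fun x _ => this x, Finset.sum_add_distrib]
    linarith
  have hg2 : ∑ x : Fin d → Bool, g x ^ 2 = 2 * sdBer d p q := by
    have : ∀ x : Fin d → Bool, g x ^ 2 = |prodBer d p x - prodBer d q x| := by
      intro x; simp only [g]; rw [Real.sq_sqrt (abs_nonneg _)]
    rw [Finset.sum_congr rfl fun x _ => this x, sdBer]
    ring
  have hsd0 : 0 ≤ sdBer d p q := by
    apply mul_nonneg (by norm_num)
    exact Finset.sum_nonneg fun x _ => abs_nonneg _
  have h4 : s^2 ≤ (∑ x : Fin d → Bool, f x ^ 2) * (∑ x : Fin d → Bool, g x ^ 2) := by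
    calc s^2 ≤ (∑ x : Fin d → Bool, f x * g x)^2 := by
          apply sq_le_sq' <;> nlinarith
      _ ≤ _ := hCS
  rw [hg2] at h4
  have hf2' : 0 ≤ ∑ x : Fin d → Bool, f x ^ 2 := Finset.sum_nonneg fun x _ => sq_nonneg _
  nlinarith

lemma one_add_sum_le_prod {ι : Type*} (S : Finset ι) (a : ι → ℝ) (h0 : ∀ i ∈ S, 0 ≤ a i) :
    1 + (∑ i ∈ S, a i) ≤ ∏ i ∈ S, (1 + a i) := by
  induction S using Finset.cons_induction with
  | empty => simp
  | cons j S hj ih =>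
    rw [Finset.sum_cons, Finset.prod_cons]
    have h0' : ∀ i ∈ S, 0 ≤ a i := fun i hi => h0 i (Finset.mem_cons_of_mem hi)
    have hA : 0 ≤ ∑ i ∈ S, a i := Finset.sum_nonneg h0'
    have hja : 0 ≤ a j := h0 j (Finset.mem_cons_self j S)
    have := ih h0'
    nlinarith

lemma prod_one_add_le_quad {ι : Type*} (S : Finset ι) (a : ι → ℝ) (h0 : ∀ i ∈ S, 0 ≤ a i)
    (h1 : ∑ i ∈ S, a i ≤ 1) :
    ∏ i ∈ S, (1 + a i) ≤ 1 + (∑ i ∈ S, a i) + (∑ i ∈ S, a i)^2 := by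
  induction S using Finset.cons_induction with
  | empty => simp
  | cons j S hj ih =>
    rw [Finset.sum_cons, Finset.prod_cons] at *
    have h0' : ∀ i ∈ S, 0 ≤ a i := fun i hi => h0 i (Finset.mem_cons_of_mem hi)
    have hja : 0 ≤ a j := h0 j (Finset.mem_cons_self j S)
    have hA : 0 ≤ ∑ i ∈ S, a i := Finset.sum_nonneg h0'
    have h1' : ∑ i ∈ S, a i ≤ 1 := by linarith
    have ihh := ih h0' h1'
    have hprod0 : 0 ≤ ∏ i ∈ S, (1 + a i) :=
      Finset.prod_nonneg fun i hi => by have := h0' i hi; linarith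
    have hAA : (∑ i ∈ S, a i)^2 ≤ ∑ i ∈ S, a i := by nlinarith
    nlinarith [mul_le_mul_of_nonneg_left ihh (by linarith : (0:ℝ) ≤ 1 + a j),
      mul_nonneg hja (by nlinarith : (0:ℝ) ≤ (∑ i ∈ S, a i) + a j - (∑ i ∈ S, a i)^2)]

-- per-coordinate moment identities (u-form)
lemma mom1 (p q : ℝ) (h0 : q ≠ 0) (h1 : 1 - q ≠ 0) :
    q * (p/q)^1 + (1-q) * ((1-p)/(1-q))^1 = 1 := by field_simp; ring

lemma mom2 (p q : ℝ) (h0 : q ≠ 0) (h1 : 1 - q ≠ 0) :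
    q * (p/q)^2 + (1-q) * ((1-p)/(1-q))^2
      = 1 + (p - q)^2 * ((1/q) * (1/(1-q))) := by field_simp; ring

lemma mom3 (p q : ℝ) (h0 : q ≠ 0) (h1 : 1 - q ≠ 0) :
    q * (p/q)^3 + (1-q) * ((1-p)/(1-q))^3
      = 1 + (3 * ((p - q)^2 * ((1/q) * (1/(1-q))))
          + (p - q)^3 * ((1/q)^2 - (1/(1-q))^2)) := by field_simp; ring

lemma mom4 (p q : ℝ) (h0 : q ≠ 0) (h1 : 1 - q ≠ 0) :
    q * (p/q)^4 + (1-q) * ((1-p)/(1-q))^4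
      = 1 + (6 * ((p - q)^2 * ((1/q) * (1/(1-q))))
          + 4 * ((p - q)^3 * ((1/q)^2 - (1/(1-q))^2))
          + (p - q)^4 * ((1/q)^3 + (1/(1-q))^3)) := by field_simp; ring

section coord
variable {δ u1 u2 α : ℝ}

lemma coord_t_bound (hu1 : 4/3 ≤ u1) (hu1' : u1 ≤ 4) (hu2 : 4/3 ≤ u2) (hu2' : u2 ≤ 4)
    (hd : |δ| ≤ α/2) (ha : 0 < α) :
    |δ^3 * (u1^2 - u2^2)| ≤ 3 * α * (δ^2 * (u1 * u2)) := by
  have hcube : |δ|^3 = |δ| * δ^2 := by rw [pow_succ, sq_abs]; ring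
  have h1 : |δ^3 * (u1^2 - u2^2)| ≤ |δ|^3 * (u1^2 + u2^2) := by
    rw [abs_mul, abs_pow]
    apply mul_le_mul_of_nonneg_left _ (by positivity)
    rw [abs_le]; constructor <;> nlinarith
  have h2 : u1^2 + u2^2 ≤ 6 * (u1 * u2) := by
    have e1 : u1^2 ≤ 4*u1 := by nlinarith
    have e2 : u2^2 ≤ 4*u2 := by nlinarith
    have e3 : 4*u1 ≤ 3*(u1*u2) := by nlinarith
    have e4 : 4*u2 ≤ 3*(u1*u2) := by nlinarith
    linarith
  have h3 : |δ|^3 * (u1^2 + u2^2) ≤ (α/2) * δ^2 * (6 * (u1*u2)) := by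
    calc |δ|^3 * (u1^2 + u2^2) = (|δ| * δ^2) * (u1^2+u2^2) := by rw [hcube]
      _ ≤ ((α/2) * δ^2) * (u1^2+u2^2) := by
          apply mul_le_mul_of_nonneg_right _ (by positivity)
          nlinarith [sq_nonneg δ]
      _ ≤ ((α/2) * δ^2) * (6*(u1*u2)) := by
          apply mul_le_mul_of_nonneg_left h2 (by positivity)
      _ = (α/2) * δ^2 * (6 * (u1*u2)) := by ring
  calc |δ^3 * (u1^2 - u2^2)| ≤ |δ|^3 * (u1^2+u2^2) := h1
    _ ≤ (α/2) * δ^2 * (6*(u1*u2)) := h3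
    _ = 3 * α * (δ^2 * (u1 * u2)) := by ring

lemma coord_f_bound (hu1 : 4/3 ≤ u1) (hu1' : u1 ≤ 4) (hu2 : 4/3 ≤ u2) (hu2' : u2 ≤ 4)
    (hd : |δ| ≤ α/2) (ha : 0 < α) :
    δ^4 * (u1^3 + u2^3) ≤ 6 * α^2 * (δ^2 * (u1 * u2)) := by
  have hd2 : δ^2 ≤ α^2/4 := by nlinarith [abs_nonneg δ, sq_abs δ]
  have h2 : u1^3 + u2^3 ≤ 24 * (u1 * u2) := by
    have e1 : u1^3 ≤ 16*u1 := by
      nlinarith [mul_nonneg (mul_nonneg (by linarith : (0:ℝ) ≤ 4 - u1)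
        (by linarith : (0:ℝ) ≤ 4 + u1)) (by linarith : (0:ℝ) ≤ u1)]
    have e2 : u2^3 ≤ 16*u2 := by
      nlinarith [mul_nonneg (mul_nonneg (by linarith : (0:ℝ) ≤ 4 - u2)
        (by linarith : (0:ℝ) ≤ 4 + u2)) (by linarith : (0:ℝ) ≤ u2)]
    have e3 : 16*u1 ≤ 12*(u1*u2) := by nlinarith
    have e4 : 16*u2 ≤ 12*(u1*u2) := by nlinarith
    linarith
  calc δ^4 * (u1^3+u2^3) ≤ δ^4 * (24*(u1*u2)) := by
        apply mul_le_mul_of_nonneg_left h2 (by positivity)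
    _ = (δ^2) * (24 * (δ^2 * (u1*u2))) := by ring
    _ ≤ (α^2/4) * (24 * (δ^2*(u1*u2))) := by
        apply mul_le_mul_of_nonneg_right hd2 (by positivity)
    _ = 6 * α^2 * (δ^2 * (u1*u2)) := by ring

lemma coord_f_nonneg (hu1 : 4/3 ≤ u1) (hu2 : 4/3 ≤ u2) : 0 ≤ δ^4 * (u1^3 + u2^3) := by
  have h1 : (0:ℝ) < u1 := by linarith
  have h2 : (0:ℝ) < u2 := by linarith
  positivity
end coord

lemma holder1 {ι : Type*} [Fintype ι] (w X : ι → ℝ) (hw : ∀ x, 0 ≤ w x) :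
    (∑ x, w x * (X x)^2)^2 ≤ (∑ x, w x * |X x|) * (∑ x, w x * |X x|^3) := by
  have key : ∀ x, w x * (X x)^2
      = Real.sqrt (w x * |X x|) * Real.sqrt (w x * |X x|^3) := by
    intro x
    rw [← Real.sqrt_mul (mul_nonneg (hw x) (abs_nonneg _))]
    have e : w x * |X x| * (w x * |X x|^3) = (w x * (X x)^2)^2 := by
      have h4 : |X x|^4 = (X x)^4 := by
        rw [pow_abs, abs_of_nonneg (by positivity)]
      linear_combination (w x)^2 * h4
    rw [e, Real.sqrt_sq (mul_nonneg (hw x) (sq_nonneg _))]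
  calc (∑ x, w x * (X x)^2)^2
      = (∑ x, Real.sqrt (w x * |X x|) * Real.sqrt (w x * |X x|^3))^2 := by
        rw [Finset.sum_congr rfl fun x _ => key x]
    _ ≤ (∑ x, Real.sqrt (w x * |X x|)^2) * (∑ x, Real.sqrt (w x * |X x|^3)^2) :=
        Finset.sum_mul_sq_le_sq_mul_sq _ _ _
    _ = (∑ x, w x * |X x|) * (∑ x, w x * |X x|^3) := by
        rw [Finset.sum_congr rfl fun x (_ : x ∈ Finset.univ) =>
          Real.sq_sqrt (mul_nonneg (hw x) (abs_nonneg _)),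
          Finset.sum_congr rfl fun x (_ : x ∈ Finset.univ) =>
          Real.sq_sqrt (mul_nonneg (hw x) (by positivity))]

lemma holder2 {ι : Type*} [Fintype ι] (w X : ι → ℝ) (hw : ∀ x, 0 ≤ w x) :
    (∑ x, w x * |X x|^3)^2 ≤ (∑ x, w x * (X x)^2) * (∑ x, w x * (X x)^4) := by
  have key : ∀ x, w x * |X x|^3
      = Real.sqrt (w x * (X x)^2) * Real.sqrt (w x * (X x)^4) := by
    intro x
    rw [← Real.sqrt_mul (mul_nonneg (hw x) (sq_nonneg _))]
    have e : w x * (X x)^2 * (w x * (X x)^4) = (w x * |X x|^3)^2 := by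
      have h6 : |X x|^6 = (X x)^6 := by
        rw [pow_abs, abs_of_nonneg (by positivity)]
      linear_combination (-(w x)^2) * h6
    rw [e, Real.sqrt_sq (mul_nonneg (hw x) (by positivity))]
  calc (∑ x, w x * |X x|^3)^2
      = (∑ x, Real.sqrt (w x * (X x)^2) * Real.sqrt (w x * (X x)^4))^2 := by
        rw [Finset.sum_congr rfl fun x _ => key x]
    _ ≤ (∑ x, Real.sqrt (w x * (X x)^2)^2) * (∑ x, Real.sqrt (w x * (X x)^4)^2) :=
        Finset.sum_mul_sq_le_sq_mul_sq _ _ _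
    _ = (∑ x, w x * (X x)^2) * (∑ x, w x * (X x)^4) := by
        rw [Finset.sum_congr rfl fun x (_ : x ∈ Finset.univ) =>
          Real.sq_sqrt (mul_nonneg (hw x) (sq_nonneg _)),
          Finset.sum_congr rfl fun x (_ : x ∈ Finset.univ) =>
          Real.sq_sqrt (mul_nonneg (hw x) (by positivity))]

lemma final_numeric (V Sa Sb Sf EX2 EX4 EA α : ℝ)
    (hV4 : 4*α^2 ≤ V) (hVu : V ≤ 2/15) (hα : 0 < α)
    (hEX2 : V ≤ EX2)
    (hEX4 : EX4 ≤ Sf + Sa^2 + 6*V^2)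
    (hSf : Sf ≤ 6*α^2*V) (hSa : Sa ≤ 6.2*V) (hSa0 : 0 ≤ Sa)
    (hh1 : EX2^2 ≤ EA * (Sb))  -- Sb here plays role of E3abs
    (hh2 : Sb^2 ≤ EX2 * EX4)
    (hEA0 : 0 ≤ EA) (hSb0 : 0 ≤ Sb) :
    (2/7)*α ≤ EA := by
  have hV0 : 0 < V := lt_of_lt_of_le (by positivity) hV4
  have hEX20 : 0 < EX2 := lt_of_lt_of_le hV0 hEX2
  have h46 : EX4 ≤ 46*V^2 := by nlinarith
  have hself : EX2^3 ≤ EA^2 * EX4 := by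
    have h4 : EX2^4 ≤ EA^2 * Sb^2 := by nlinarith
    have h5 : EX2^4 ≤ EA^2 * (EX2 * EX4) := by nlinarith [sq_nonneg EA]
    have h6 : EX2^3 * EX2 ≤ (EA^2 * EX4) * EX2 := by nlinarith
    exact le_of_mul_le_mul_right h6 hEX20
  have hEX40 : 0 ≤ EX4 := by nlinarith [pow_pos hEX20 3, sq_nonneg EA]
  have hc : V^3 ≤ EX2^3 := pow_le_pow_left₀ hV0.le hEX2 3
  have h7 : V^3 ≤ EA^2 * (46*V^2) := by nlinarith [sq_nonneg EA]
  have h8 : V ≤ 46*EA^2 := by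
    have h9 : V * V^2 ≤ (46*EA^2) * V^2 := by nlinarith
    exact le_of_mul_le_mul_right h9 (by positivity)
  nlinarith [sq_nonneg EA, sq_nonneg α]

set_option maxHeartbeats 2000000 in
lemma sdBer_ge_chi {d : ℕ} (p q : Fin d → ℝ) (α : ℝ)
    (hq : ∀ i, q i ∈ Set.Icc (1/4 : ℝ) (3/4))
    (hδ : ∀ i, |p i - q i| ≤ α/2)
    (hα : 0 < α) (hα0 : α ≤ 1/100)
    (hs : α^2 ≤ ∑ i, (p i - q i)^2)
    (hsu : (∑ i, (p i - q i)^2) ≤ 1/40) :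
    α / 7 ≤ sdBer d p q := by
  classical
  have hq0 : ∀ i, (0:ℝ) < q i := fun i => lt_of_lt_of_le (by norm_num) (hq i).1
  have hq1 : ∀ i, (0:ℝ) < 1 - q i := fun i => by have := (hq i).2; linarith
  set R : Fin d → Bool → ℝ :=
    fun i b => if b then p i / q i else (1 - p i) / (1 - q i) with hR
  set v : Fin d → ℝ := fun i => (p i - q i)^2 * ((1/q i) * (1/(1 - q i))) with hv
  set t : Fin d → ℝ := fun i => (p i - q i)^3 * ((1/q i)^2 - (1/(1 - q i))^2) with ht
  set f : Fin d → ℝ := fun i => (p i - q i)^4 * ((1/q i)^3 + (1/(1 - q i))^3) with hf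
  set a : Fin d → ℝ := fun i => 6 * v i + 4 * t i + f i with ha
  set b : Fin d → ℝ := fun i => 3 * v i + t i with hb
  -- u bounds
  have hu : ∀ i, 4/3 ≤ 1/q i ∧ 1/q i ≤ 4 ∧ 4/3 ≤ 1/(1 - q i) ∧ 1/(1 - q i) ≤ 4 := by
    intro i
    have h1 := (hq i).1; have h2 := (hq i).2
    have e1 := hq0 i; have e2 := hq1 i
    refine ⟨?_, ?_, ?_, ?_⟩
    · rw [le_div_iff₀ e1]; linarith
    · rw [div_le_iff₀ e1]; linarith
    · rw [le_div_iff₀ e2]; linarith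
    · rw [div_le_iff₀ e2]; linarith
  have hprod_u : ∀ i, 4 ≤ (1/q i) * (1/(1 - q i)) ∧ (1/q i) * (1/(1 - q i)) ≤ 16/3 := by
    intro i
    have h1 := (hq i).1; have h2 := (hq i).2
    have e1 := hq0 i; have e2 := hq1 i
    have hqq : q i * (1 - q i) ≤ 1/4 := by nlinarith [sq_nonneg (2 * q i - 1)]
    have hqq' : 3/16 ≤ q i * (1 - q i) := by nlinarith
    have hpos : 0 < q i * (1 - q i) := mul_pos e1 e2
    rw [div_mul_div_comm, one_mul]
    constructor
    · rw [le_div_iff₀ hpos]; linarith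
    · rw [div_le_iff₀ hpos]; linarith
  -- per-coordinate bounds
  have hv0 : ∀ i, 0 ≤ v i := fun i => by
    rw [hv]; exact mul_nonneg (sq_nonneg _) (by nlinarith [(hprod_u i).1])
  have hv4 : ∀ i, 4 * (p i - q i)^2 ≤ v i := fun i => by
    rw [hv]; nlinarith [(hprod_u i).1, sq_nonneg (p i - q i)]
  have hv163 : ∀ i, v i ≤ (16/3) * (p i - q i)^2 := fun i => by
    rw [hv]; nlinarith [(hprod_u i).2, sq_nonneg (p i - q i)]
  have htb : ∀ i, |t i| ≤ 3 * α * v i := fun i => by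
    rw [ht, hv]
    obtain ⟨a1, a2, a3, a4⟩ := hu i
    exact coord_t_bound a1 a2 a3 a4 (hδ i) hα
  have hfb : ∀ i, f i ≤ 6 * α^2 * v i := fun i => by
    rw [hf, hv]
    obtain ⟨a1, a2, a3, a4⟩ := hu i
    exact coord_f_bound a1 a2 a3 a4 (hδ i) hα
  have hf0 : ∀ i, 0 ≤ f i := fun i => by
    rw [hf]
    obtain ⟨a1, a2, a3, a4⟩ := hu i
    exact coord_f_nonneg a1 a3
  have ha0 : ∀ i, 0 ≤ a i := fun i => by
    show (0:ℝ) ≤ 6 * v i + 4 * t i + f i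
    have h1 := (abs_le.mp (htb i)).1
    have h2 := hv0 i; have h3 := hf0 i
    nlinarith [mul_nonneg (by linarith : (0:ℝ) ≤ 1/100 - α) h2]
  have hb0 : ∀ i, 0 ≤ b i := fun i => by
    show (0:ℝ) ≤ 3 * v i + t i
    have h1 := (abs_le.mp (htb i)).1
    have h2 := hv0 i
    nlinarith [mul_nonneg (by linarith : (0:ℝ) ≤ 1/100 - α) h2]
  have hab : ∀ i, a i ≤ 6.2 * v i := fun i => by
    show 6 * v i + 4 * t i + f i ≤ 6.2 * v i
    have h1 := (abs_le.mp (htb i)).2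
    have h2 := hfb i
    have h3 := hv0 i
    nlinarith [mul_nonneg (by linarith : (0:ℝ) ≤ 1/100 - α) h3,
      mul_nonneg (mul_nonneg hα.le (by linarith : (0:ℝ) ≤ 1/100 - α)) h3]
  -- global scalars
  set V : ℝ := ∑ i, v i with hV
  set Sa : ℝ := ∑ i, a i with hSa
  set Sb : ℝ := ∑ i, b i with hSb
  set Sf : ℝ := ∑ i, f i with hSf
  have hV4 : 4 * α^2 ≤ V := by
    have h1 : ∑ i, 4 * (p i - q i)^2 ≤ V := Finset.sum_le_sum fun i _ => hv4 i
    rw [← Finset.mul_sum] at h1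
    nlinarith
  have hVu : V ≤ 2/15 := by
    have h1 : V ≤ ∑ i, (16/3) * (p i - q i)^2 := Finset.sum_le_sum fun i _ => hv163 i
    rw [← Finset.mul_sum] at h1
    nlinarith
  have hSab : Sa ≤ 6.2 * V := by
    have h1 : Sa ≤ ∑ i, 6.2 * v i := Finset.sum_le_sum fun i _ => hab i
    rw [← Finset.mul_sum] at h1
    exact h1
  have hSa0 : 0 ≤ Sa := Finset.sum_nonneg fun i _ => ha0 i
  have hSfb : Sf ≤ 6 * α^2 * V := by
    have h1 : Sf ≤ ∑ i, 6 * α^2 * v i := Finset.sum_le_sum fun i _ => hfb i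
    rw [← Finset.mul_sum] at h1
    exact h1
  have habf : Sa - 4 * Sb + 6 * V = Sf := by
    rw [hSa, hSb, hSf, hV, Finset.mul_sum, Finset.mul_sum, ← Finset.sum_sub_distrib,
      ← Finset.sum_add_distrib]
    apply Finset.sum_congr rfl
    intro i _
    rw [ha, hb]; ring
  have hSa1 : Sa ≤ 1 := by nlinarith
  -- measure-theoretic part
  set Q : (Fin d → Bool) → ℝ := fun x => prodBer d q x with hQd
  set Pi : (Fin d → Bool) → ℝ := fun x => ∏ i, R i (x i) with hPid
  set X : (Fin d → Bool) → ℝ := fun x => Pi x - 1 with hXd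
  have hQ0 : ∀ x, 0 ≤ Q x := fun x => prodBer_nonneg q
    (fun i => ⟨by linarith [(hq i).1], by linarith [(hq i).2]⟩) x
  have hRt : ∀ i, R i true = p i / q i := fun i => by simp [hR]
  have hRf : ∀ i, R i false = (1 - p i)/(1 - q i) := fun i => by simp [hR]
  have hPQ : ∀ x, prodBer d p x = Q x * Pi x := by
    intro x
    show (∏ i, if x i then p i else 1 - p i)
      = (∏ i, if x i then q i else 1 - q i) * ∏ i, R i (x i)
    rw [← Finset.prod_mul_distrib]
    apply Finset.prod_congr rfl
    intro i _
    have h1 := (hq0 i).ne'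
    have h2 := (hq1 i).ne'
    cases hxi : x i
    · simp only [hR, Bool.false_eq_true, if_false]
      field_simp
    · simp only [hR, if_true]
      field_simp
  have hEk : ∀ k : ℕ, ∑ x : Fin d → Bool, Q x * (Pi x)^k
      = ∏ i, (q i * (R i true)^k + (1 - q i) * (R i false)^k) := by
    intro k
    have e : ∀ x : Fin d → Bool, Q x * (Pi x)^k = Q x * ∏ i, (R i (x i))^k := by
      intro x; simp only [hPid]; rw [← Finset.prod_pow]
    rw [Finset.sum_congr rfl fun x _ => e x]
    exact prodExp q (fun i b => R i b ^ k)
  have hM0 : ∑ x : Fin d → Bool, Q x = 1 := prodBer_mass q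
  have hM1 : ∑ x : Fin d → Bool, Q x * (Pi x)^1 = 1 := by
    rw [hEk 1]
    apply Finset.prod_eq_one
    intro i _
    rw [hRt i, hRf i]
    exact mom1 (p i) (q i) (hq0 i).ne' (hq1 i).ne'
  have hM2 : ∑ x : Fin d → Bool, Q x * (Pi x)^2 = ∏ i, (1 + v i) := by
    rw [hEk 2]
    apply Finset.prod_congr rfl
    intro i _
    rw [hRt i, hRf i]
    exact mom2 (p i) (q i) (hq0 i).ne' (hq1 i).ne'
  have hM3 : ∑ x : Fin d → Bool, Q x * (Pi x)^3 = ∏ i, (1 + b i) := by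
    rw [hEk 3]
    apply Finset.prod_congr rfl
    intro i _
    rw [hRt i, hRf i]
    exact mom3 (p i) (q i) (hq0 i).ne' (hq1 i).ne'
  have hM4 : ∑ x : Fin d → Bool, Q x * (Pi x)^4 = ∏ i, (1 + a i) := by
    rw [hEk 4]
    apply Finset.prod_congr rfl
    intro i _
    rw [hRt i, hRf i]
    exact mom4 (p i) (q i) (hq0 i).ne' (hq1 i).ne'
  have hEX2eq : ∑ x : Fin d → Bool, Q x * (X x)^2 = (∏ i, (1 + v i)) - 1 := by
    have e : ∀ x : Fin d → Bool, Q x * (X x)^2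
        = Q x * (Pi x)^2 - 2 * (Q x * (Pi x)^1) + Q x := by
      intro x; simp only [hXd]; ring
    rw [Finset.sum_congr rfl fun x _ => e x, Finset.sum_add_distrib,
      Finset.sum_sub_distrib, ← Finset.mul_sum, hM2, hM1, hM0]
    ring
  have hEX4eq : ∑ x : Fin d → Bool, Q x * (X x)^4
      = (∏ i, (1 + a i)) - 4 * (∏ i, (1 + b i)) + 6 * (∏ i, (1 + v i)) - 3 := by
    have e : ∀ x : Fin d → Bool, Q x * (X x)^4
        = Q x * (Pi x)^4 - 4 * (Q x * (Pi x)^3) + 6 * (Q x * (Pi x)^2)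
          - 4 * (Q x * (Pi x)^1) + Q x := by
      intro x; simp only [hXd]; ring
    rw [Finset.sum_congr rfl fun x _ => e x, Finset.sum_add_distrib,
      Finset.sum_sub_distrib, Finset.sum_add_distrib, Finset.sum_sub_distrib,
      ← Finset.mul_sum, ← Finset.mul_sum, ← Finset.mul_sum, hM4, hM3, hM2, hM1, hM0]
    ring
  have hEX2V : V ≤ ∑ x : Fin d → Bool, Q x * (X x)^2 := by
    rw [hEX2eq]
    have := one_add_sum_le_prod Finset.univ v (fun i _ => hv0 i)
    rw [← hV] at this
    linarith
  have hEX4b : ∑ x : Fin d → Bool, Q x * (X x)^4 ≤ Sf + Sa^2 + 6*V^2 := by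
    rw [hEX4eq]
    have hA := prod_one_add_le_quad Finset.univ a (fun i _ => ha0 i) (by rw [← hSa]; exact hSa1)
    have hB := one_add_sum_le_prod Finset.univ b (fun i _ => hb0 i)
    have hC := prod_one_add_le_quad Finset.univ v (fun i _ => hv0 i) (by rw [← hV]; linarith)
    rw [← hSa] at hA
    rw [← hSb] at hB
    rw [← hV] at hC
    linarith [hA, hB, hC, habf]
  have hh1 := holder1 Q X hQ0
  have hh2 := holder2 Q X hQ0
  have hEA0 : 0 ≤ ∑ x : Fin d → Bool, Q x * |X x| :=
    Finset.sum_nonneg fun x _ => mul_nonneg (hQ0 x) (abs_nonneg _)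
  have hE30 : 0 ≤ ∑ x : Fin d → Bool, Q x * |X x|^3 :=
    Finset.sum_nonneg fun x _ => mul_nonneg (hQ0 x) (pow_nonneg (abs_nonneg _) 3)
  have hfinal := final_numeric V Sa (∑ x : Fin d → Bool, Q x * |X x|^3) Sf
    (∑ x : Fin d → Bool, Q x * (X x)^2) (∑ x : Fin d → Bool, Q x * (X x)^4)
    (∑ x : Fin d → Bool, Q x * |X x|) α
    hV4 hVu hα hEX2V hEX4b hSfb hSab hSa0 hh1 hh2 hEA0 hE30
  have hsd : sdBer d p q = (1/2) * ∑ x : Fin d → Bool, Q x * |X x| := by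
    rw [sdBer]
    congr 1
    apply Finset.sum_congr rfl
    intro x _
    rw [hPQ x]
    have hQx : prodBer d q x = Q x := rfl
    rw [hQx]
    have e : Q x * Pi x - Q x = Q x * X x := by simp only [hXd]; ring
    rw [e, abs_mul, abs_of_nonneg (hQ0 x)]
  rw [hsd]
  linarith

/-- Lower bound on TV distance between balanced product distributions: there are absolute
constants `α₀ ∈ (0,1]` and `C > 0` such that if `pᵢ ∈ [1/3,2/3]` for all `i` and
`‖p − q‖₂ ≥ α` for some `α ≤ α₀`, then `SD(P,Q) ≥ C·α`. -/
theorem stmt_9 : ∃ α₀ : ℝ, α₀ ∈ Set.Ioc (0:ℝ) 1 ∧ ∃ C : ℝ, 0 < C ∧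
    ∀ (d : ℕ) (p q : Fin d → ℝ) (α : ℝ),
      (∀ i, p i ∈ Set.Icc (1/3 : ℝ) (2/3)) → (∀ i, q i ∈ Set.Icc (0:ℝ) 1) →
      α ≤ α₀ → Real.sqrt (∑ i, (p i - q i)^2) ≥ α →
      sdBer d p q ≥ C * α := by
  classical
  refine ⟨1/100, ⟨by norm_num, by norm_num⟩, 1/50, by norm_num, ?_⟩
  intro d p q α hp hq hα0 hsqrt
  have hsd0 : 0 ≤ sdBer d p q := sdBer_nonneg p q
  by_cases hα : α ≤ 0
  · nlinarith
  push_neg at hα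
  have hs0 : (0:ℝ) ≤ ∑ i, (p i - q i)^2 := Finset.sum_nonneg fun i _ => sq_nonneg _
  have hs : α^2 ≤ ∑ i, (p i - q i)^2 := by
    have h1 : α ≤ Real.sqrt (∑ i, (p i - q i)^2) := hsqrt
    nlinarith [Real.sq_sqrt hs0, Real.sqrt_nonneg (∑ i, (p i - q i)^2)]
  have hp01 : ∀ i, p i ∈ Set.Icc (0:ℝ) 1 := fun i => ⟨by linarith [(hp i).1], by linarith [(hp i).2]⟩
  by_cases hbig : 1/40 ≤ ∑ i, (p i - q i)^2
  · -- large distance: quadratic bound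
    have hq2 := sdBer_ge_quad p q hp01 hq
    set s : ℝ := ∑ i, (p i - q i)^2 with hsdef
    have hsd : s/(1+s) ≤ sdBer d p q := by
      rw [div_le_iff₀ (by nlinarith)]
      nlinarith
    have : (1:ℝ)/41 ≤ s/(1+s) := by
      rw [le_div_iff₀ (by nlinarith)]
      nlinarith
    nlinarith
  · push_neg at hbig
    by_cases hcoord : ∃ i, α/2 ≤ |p i - q i|
    · obtain ⟨i, hi⟩ := hcoord
      have := sdBer_ge_coord p q i
      nlinarith
    · push_neg at hcoord
      have hq' : ∀ i, q i ∈ Set.Icc (1/4 : ℝ) (3/4) := by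
        intro i
        have h1 := (abs_lt.mp (hcoord i)).1
        have h2 := (abs_lt.mp (hcoord i)).2
        have h3 := (hp i).1
        have h4 := (hp i).2
        constructor <;> [linarith; linarith]
      have hchi := sdBer_ge_chi p q α hq' (fun i => (hcoord i).le) hα hα0 hs hbig.le
      nlinarith
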